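/- Let P(R) be the space of Borel probability measures on R with the topology of weak convergence. The set D of all probability measures on R that belong to the maximum domain of attraction of some extreme value distribution is not a closed subset of P(R). -/

import Mathlib

open MeasureTheory Filter Topology Set NNReal

/-- The cumulative distribution function of a Borel probability measure on `ℝ`:
`F(x) = μ((-∞, x])`. -/
noncomputable def distrib (μ : ProbabilityMeasure ℝ) (x : ℝ) : ℝ :=
  (μ (Set.Iic x) : ℝ≥0)

/-- The generalized extreme value distribution function `G_γ`, with
`G_γ(x) = exp(-(1+γx)^(-1/γ))` where `1 + γx > 0` (interpreted as
`G_0(x) = exp(-e^(-x))` when `γ = 0`). -/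
noncomputable def evCdf (γ : ℝ) (x : ℝ) : ℝ :=
  if γ = 0 then Real.exp (-Real.exp (-x))
  else if 0 < 1 + γ * x then Real.exp (-(1 + γ * x) ^ (-1 / γ))
  else if 0 < γ then 0 else 1

/-- `μ` belongs to the maximum domain of attraction `D(G_γ)`: there are `a n > 0` and `b n`
such that `(F (a n * x + b n)) ^ n → G_γ x` at every continuity point `x` of `G_γ`. -/
def MemDomAttr (γ : ℝ) (μ : ProbabilityMeasure ℝ) : Prop :=
  ∃ a b : ℕ → ℝ, (∀ n, 0 < a n) ∧
    ∀ x : ℝ, ContinuousAt (evCdf γ) x →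
      Tendsto (fun n : ℕ => distrib μ (a n * x + b n) ^ n) atTop (𝓝 (evCdf γ x))

/-! ### Auxiliary material -/

lemma distrib_eq (μ : ProbabilityMeasure ℝ) (x : ℝ) :
    distrib μ x = (μ.toMeasure (Iic x)).toReal := by
  simp [distrib, MeasureTheory.ProbabilityMeasure.coeFn_def]
  rfl

lemma evCdf_zero_apply (x : ℝ) : evCdf 0 x = Real.exp (-Real.exp (-x)) := by simp [evCdf]

lemma evCdf_at_zero (γ : ℝ) : evCdf γ 0 = Real.exp (-1) := by
  by_cases h : γ = 0 <;> simp [evCdf, h, Real.one_rpow]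

lemma evCdf_continuousAt_zero (γ : ℝ) : ContinuousAt (evCdf γ) 0 := by
  by_cases h : γ = 0
  · subst h
    have : ContinuousAt (fun x : ℝ => Real.exp (-Real.exp (-x))) 0 := by fun_prop
    exact this.congr (by filter_upwards with x using (evCdf_zero_apply x).symm)
  · have hcont : ContinuousAt (fun x : ℝ => Real.exp (-(1 + γ * x) ^ (-1 / γ))) 0 := by
      apply Real.continuous_exp.continuousAt.comp
      apply ContinuousAt.neg
      apply ContinuousAt.rpow_const (by fun_prop)
      left; norm_num
    apply hcont.congr
    have hopen : ∀ᶠ x : ℝ in 𝓝 0, 0 < 1 + γ * x := by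
      have hc : ContinuousAt (fun x : ℝ => 1 + γ * x) 0 := by fun_prop
      have h2 := Filter.Tendsto.eventually_const_lt (u := (0:ℝ))
        (by norm_num : (0:ℝ) < 1 + γ * 0) hc
      simpa using h2
    filter_upwards [hopen] with x hx
    simp [evCdf, h, hx]

/-- The Gumbel Stieltjes function `x ↦ exp(-exp(-x))`. -/
noncomputable def gumbelSF : StieltjesFunction ℝ where
  toFun := fun x => Real.exp (-Real.exp (-x))
  mono' := fun x y hxy =>
    Real.exp_le_exp.2 (neg_le_neg (Real.exp_le_exp.2 (neg_le_neg hxy)))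
  right_continuous' := fun x =>
    (Real.continuous_exp.comp
      (Real.continuous_exp.comp continuous_neg).neg).continuousAt.continuousWithinAt

lemma gumbel_atBot : Tendsto gumbelSF atBot (𝓝 0) := by
  have h1 : Tendsto (fun x : ℝ => -Real.exp (-x)) atBot atBot := by
    have := Real.tendsto_exp_atTop.comp tendsto_neg_atBot_atTop
    exact tendsto_neg_atTop_atBot.comp this
  exact Real.tendsto_exp_atBot.comp h1

lemma gumbel_atTop : Tendsto gumbelSF atTop (𝓝 1) := by
  have h1 : Tendsto (fun x : ℝ => -Real.exp (-x)) atTop (𝓝 0) := by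
    simpa using (Real.tendsto_exp_atBot.comp tendsto_neg_atTop_atBot).neg
  have h2 := (Real.continuous_exp.tendsto 0).comp h1
  rw [Real.exp_zero] at h2
  exact h2

lemma gumbel_isProb : IsProbabilityMeasure gumbelSF.measure :=
  gumbelSF.isProbabilityMeasure gumbel_atBot gumbel_atTop

/-- The Gumbel distribution as a probability measure. -/
noncomputable def gumbel : ProbabilityMeasure ℝ := ⟨gumbelSF.measure, gumbel_isProb⟩

lemma gumbel_Iic (x : ℝ) :
    gumbel.toMeasure (Iic x) = ENNReal.ofReal (Real.exp (-Real.exp (-x))) := by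
  have h := gumbelSF.measure_Iic gumbel_atBot x
  rw [sub_zero] at h
  exact h

/-- The Gumbel distribution scaled by `c`. -/
noncomputable def scaledGumbel (c : ℝ) : ProbabilityMeasure ℝ :=
  gumbel.map (f := fun x => c * x) (measurable_const_mul c).aemeasurable

lemma scaledGumbel_Iic {c : ℝ} (hc : 0 < c) (x : ℝ) :
    (scaledGumbel c).toMeasure (Iic x)
      = ENNReal.ofReal (Real.exp (-Real.exp (-(x / c)))) := by
  rw [scaledGumbel, ProbabilityMeasure.toMeasure_map,
    Measure.map_apply (measurable_const_mul c) measurableSet_Iic]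
  have : (fun y : ℝ => c * y) ⁻¹' Iic x = Iic (x / c) := by
    ext y
    simp [le_div_iff₀ hc, mul_comm]
  rw [this, gumbel_Iic]

lemma distrib_scaledGumbel {c : ℝ} (hc : 0 < c) (x : ℝ) :
    distrib (scaledGumbel c) x = Real.exp (-Real.exp (-(x / c))) := by
  rw [distrib_eq, scaledGumbel_Iic hc, ENNReal.toReal_ofReal (Real.exp_nonneg _)]

lemma scaledGumbel_memDomAttr {c : ℝ} (hc : 0 < c) : MemDomAttr 0 (scaledGumbel c) := by
  refine ⟨fun _ => c, fun n => c * Real.log n, fun _ => hc, fun x _ => ?_⟩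
  rw [evCdf_zero_apply]
  apply Tendsto.congr' _ tendsto_const_nhds
  filter_upwards [eventually_ge_atTop 1] with n hn
  have hn0 : (0:ℝ) < n := by exact_mod_cast hn
  rw [distrib_scaledGumbel hc]
  have harg : (c * x + c * Real.log n) / c = x + Real.log n := by
    field_simp
  rw [harg, neg_add, Real.exp_add, Real.exp_neg (Real.log n), Real.exp_log hn0]
  rw [← Real.exp_nat_mul]
  congr 1
  field_simp

/-- The Dirac measure at `0` as a probability measure. -/
noncomputable def dirac0 : ProbabilityMeasure ℝ := ⟨Measure.dirac 0, inferInstance⟩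

lemma distrib_dirac0 (y : ℝ) : distrib dirac0 y = if 0 ≤ y then 1 else 0 := by
  rw [distrib_eq]
  show ((Measure.dirac 0) (Iic y)).toReal = _
  rw [Measure.dirac_apply' _ measurableSet_Iic]
  by_cases h : (0:ℝ) ≤ y
  · simp [Set.indicator_of_mem, h]
  · simp [Set.indicator_of_notMem, h]

lemma dirac0_not_mem : ¬ ∃ γ : ℝ, MemDomAttr γ dirac0 := by
  rintro ⟨γ, a, b, ha, h⟩
  have hT := h 0 (evCdf_continuousAt_zero γ)
  rw [evCdf_at_zero] at hT
  have hmem : ∀ n : ℕ, (distrib dirac0 (a n * 0 + b n)) ^ n ∈ ({0, 1} : Set ℝ) := by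
    intro n
    rw [distrib_dirac0]
    by_cases hb : 0 ≤ a n * 0 + b n
    · rw [if_pos hb, one_pow]; right; rfl
    · rw [if_neg hb]
      rcases Nat.eq_zero_or_pos n with h0 | h0
      · subst h0; right; rw [pow_zero]; rfl
      · left; exact zero_pow h0.ne'
  have hclosed : IsClosed ({0, 1} : Set ℝ) :=
    (Set.finite_singleton (1:ℝ)).insert 0 |>.isClosed
  have := hclosed.mem_of_tendsto hT (Eventually.of_forall hmem)
  rcases this with h0 | h1
  · exact absurd h0 (Real.exp_pos _).ne'
  · have : Real.exp (-1) < 1 := Real.exp_lt_one_iff.2 (by norm_num)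
    rw [Set.mem_singleton_iff.mp h1] at this
    exact lt_irrefl _ this

lemma scaledGumbel_tendsto_dirac0 :
    Tendsto (fun n : ℕ => scaledGumbel (1 / (n + 1))) atTop (𝓝 dirac0) := by
  rw [ProbabilityMeasure.tendsto_iff_forall_integral_tendsto]
  intro g
  have hd : ∫ ω, g ω ∂(dirac0 : Measure ℝ) = g 0 := by
    show ∫ ω, g ω ∂(Measure.dirac 0) = g 0
    rw [integral_dirac]
  rw [hd]
  have hmap : ∀ n : ℕ, ∫ ω, g ω ∂((scaledGumbel (1 / (n + 1))) : Measure ℝ)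
      = ∫ x, g ((1 / ((n:ℝ) + 1)) * x) ∂(gumbel : Measure ℝ) := by
    intro n
    show ∫ ω, g ω ∂((scaledGumbel (1 / (n + 1))).toMeasure) = _
    rw [scaledGumbel, ProbabilityMeasure.toMeasure_map]
    exact integral_map (measurable_const_mul _).aemeasurable
      (g.continuous.aestronglyMeasurable)
  simp only [hmap]
  have hg0 : g 0 = ∫ _x, g 0 ∂(gumbel : Measure ℝ) := by simp
  rw [hg0]
  apply tendsto_integral_of_dominated_convergence (bound := fun _ => ‖g‖)
  · intro n
    exact (g.continuous.comp (continuous_const.mul continuous_id)).aestronglyMeasurable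
  · exact integrable_const _
  · intro n
    exact Eventually.of_forall fun x => g.norm_coe_le_norm _
  · apply Eventually.of_forall
    intro x
    have h1 : Tendsto (fun n : ℕ => (1 / ((n:ℝ) + 1)) * x) atTop (𝓝 0) := by
      have := tendsto_one_div_add_atTop_nhds_zero_nat (𝕜 := ℝ)
      simpa using this.mul_const x
    exact (g.continuous.tendsto 0).comp h1

/-- The set `D` of distributions on `ℝ` in the maximum domain of attraction of some
extreme value distribution is not closed in the space of Borel probability measures on
`ℝ` with the topology of weak convergence. -/
theorem not_isClosed_domain_of_attraction :
    ¬ IsClosed {μ : ProbabilityMeasure ℝ | ∃ γ : ℝ, MemDomAttr γ μ} := by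
  intro hclosed
  apply dirac0_not_mem
  exact hclosed.mem_of_tendsto scaledGumbel_tendsto_dirac0
    (Eventually.of_forall fun n =>
      ⟨0, scaledGumbel_memDomAttr (by positivity : (0:ℝ) < 1 / (n + 1))⟩)
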